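/- Let e be a nonnegative integer, r = 2^(2e+1), and let p be a prime dividing r^2 + 1. Then p ≤ 3r. -/

import Mathlib

theorem suzuki_prime_bound (e : ℕ) (r : ℕ) (hr : r = 2 ^ (2 * e + 1)) (p : ℕ)
    (hp : p.Prime) (hdvd : p ∣ r ^ 2 + 1) : p ≤ 3 * r := by
  subst hr
  set R : ℤ := 2 ^ (2 * e + 1) with hR
  set s : ℤ := 2 ^ (e + 1) with hs
  have hs2 : s ^ 2 = 2 * R := by
    simp only [hs, hR, ← pow_mul, ← pow_succ']
    ring_nf
  have hfac : R ^ 2 + 1 = (R + 1 - s) * (R + 1 + s) := by nlinarith [hs2]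
  have hsle : s ≤ R := by
    simp only [hs, hR]
    exact pow_le_pow_right₀ (by norm_num) (by omega)
  have hdvdZ : (p : ℤ) ∣ (R + 1 - s) * (R + 1 + s) := by
    rw [← hfac]
    exact_mod_cast Int.natCast_dvd_natCast.mpr hdvd |>.trans (by push_cast; ring_nf; exact dvd_of_eq (by rw [hR]; ring))
  have hpZ : Prime (p : ℤ) := Nat.prime_iff_prime_int.mp hp
  have hpos1 : 0 < R + 1 - s := by linarith
  have hpos2 : 0 < R + 1 + s := by
    have h1 : (0:ℤ) < R := by have := hR; positivity
    have h2 : (0:ℤ) < s := by have := hs; positivity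
    linarith
  have hb : R + 1 + s ≤ 3 * R := by
    have h1 : (1 : ℤ) ≤ R := by rw [hR]; exact one_le_pow₀ (by norm_num)
    linarith
  have : (p : ℤ) ≤ 3 * R := by
    rcases hpZ.dvd_mul.mp hdvdZ with h | h
    · exact (Int.le_of_dvd hpos1 h).trans (by linarith)
    · exact (Int.le_of_dvd hpos2 h).trans hb
  rw [hR] at this
  exact_mod_cast this
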